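/- If u ∈ 𝔏 ⊗ 𝔏 satisfies L_{εm} ∘ u = 0 for infinitely many integers m > 0 (or infinitely many m < 0), then u = 0, where ∘ denotes the super adjoint diagonal action x ∘ (a ⊗ b) = [x,a] ⊗ b + (−1)^{[x][a]} a ⊗ [x,b]. -/

import Mathlib

open Finsupp

/-- Basis of the generalized super W-algebra 𝔏 (indices range over ℝ;
the actual algebra 𝔏 has indices restricted to Γ resp. s+Γ, see `good`). -/
inductive BasisL : Type
  | L : ℝ → BasisL
  | I : ℝ → BasisL
  | G : ℝ → BasisL
  | H : ℝ → BasisL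

noncomputable instance : DecidableEq BasisL := Classical.decEq _

/-- The ambient free ℂ-module on the basis. -/
abbrev LL : Type := BasisL →₀ ℂ
/-- Model for 𝔏 ⊗ 𝔏 : free module on pairs of basis elements. -/
abbrev VV : Type := (BasisL × BasisL) →₀ ℂ
/-- Model for 𝔏 ⊗ 𝔏 ⊗ 𝔏. -/
abbrev WW : Type := (BasisL × BasisL × BasisL) →₀ ℂ

noncomputable def bL (p : ℝ) : LL := Finsupp.single (BasisL.L p) 1
noncomputable def bI (p : ℝ) : LL := Finsupp.single (BasisL.I p) 1
noncomputable def bG (r : ℝ) : LL := Finsupp.single (BasisL.G r) 1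
noncomputable def bH (r : ℝ) : LL := Finsupp.single (BasisL.H r) 1

/-- Parity (0 = even, 1 = odd). -/
def pN : BasisL → ℕ
  | BasisL.L _ => 0
  | BasisL.I _ => 0
  | BasisL.G _ => 1
  | BasisL.H _ => 1

/-- Z_s-degree of a basis element. -/
def degB : BasisL → ℝ
  | BasisL.L p => p
  | BasisL.I p => p
  | BasisL.G r => r
  | BasisL.H r => r

/-- Membership of a basis element in the actual algebra 𝔏 :
L_p, I_p for p ∈ Γ and G_r, H_r for r ∈ s + Γ. -/
def good (Γ : AddSubgroup ℝ) (s : ℝ) : BasisL → Prop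
  | BasisL.L p => p ∈ Γ
  | BasisL.I p => p ∈ Γ
  | BasisL.G r => r - s ∈ Γ
  | BasisL.H r => r - s ∈ Γ

/-- The super-bracket on basis elements (extended by super skew-symmetry). -/
noncomputable def bb : BasisL → BasisL → LL
  | BasisL.L p, BasisL.L q => ((p - q : ℝ) : ℂ) • bL (p + q)
  | BasisL.L p, BasisL.I q => ((p - q : ℝ) : ℂ) • bI (p + q)
  | BasisL.I p, BasisL.L q => ((p - q : ℝ) : ℂ) • bI (p + q)
  | BasisL.L p, BasisL.G r => ((p / 2 - r : ℝ) : ℂ) • bG (p + r)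
  | BasisL.G r, BasisL.L p => ((-(p / 2 - r) : ℝ) : ℂ) • bG (p + r)
  | BasisL.L p, BasisL.H r => ((p / 2 - r : ℝ) : ℂ) • bH (p + r)
  | BasisL.H r, BasisL.L p => ((-(p / 2 - r) : ℝ) : ℂ) • bH (p + r)
  | BasisL.G r, BasisL.G t => bI (r + t)
  | BasisL.I p, BasisL.G r => ((p - 2 * r : ℝ) : ℂ) • bH (p + r)
  | BasisL.G r, BasisL.I p => ((-(p - 2 * r) : ℝ) : ℂ) • bH (p + r)
  | _, _ => 0

/-- The super-bracket, extended bilinearly. -/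
noncomputable def br (x y : LL) : LL :=
  x.sum fun a ca => y.sum fun b cb => (ca * cb) • bb a b

/-- u ⊗ b for u ∈ 𝔏, b a basis element. -/
noncomputable def tenL (u : LL) (b : BasisL) : VV :=
  u.sum fun a ca => Finsupp.single (a, b) ca

/-- a ⊗ u for a a basis element, u ∈ 𝔏. -/
noncomputable def tenR (a : BasisL) (u : LL) : VV :=
  u.sum fun b cb => Finsupp.single (a, b) cb

/-- Super adjoint diagonal action of a basis element on a ⊗ b :
c ∘ (a ⊗ b) = [c,a] ⊗ b + (−1)^{[c][a]} a ⊗ [c,b]. -/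
noncomputable def actB (c a b : BasisL) : VV :=
  tenL (bb c a) b + ((-1 : ℂ) ^ (pN c * pN a)) • tenR a (bb c b)

/-- Super adjoint diagonal action of x ∈ 𝔏 on u ∈ 𝔏 ⊗ 𝔏. -/
noncomputable def act (x : LL) (u : VV) : VV :=
  x.sum fun c cc => u.sum fun ab cab => (cc * cab) • actB c ab.1 ab.2

/-- The super-twist τ(a ⊗ b) = (−1)^{[a][b]} b ⊗ a. -/
noncomputable def tauV (u : VV) : VV :=
  u.sum fun ab c => (((-1 : ℂ) ^ (pN ab.1 * pN ab.2)) * c) • Finsupp.single (ab.2, ab.1) (1 : ℂ)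

noncomputable def t1 (u : LL) (b c : BasisL) : WW :=
  u.sum fun a ca => Finsupp.single (a, b, c) ca
noncomputable def t2 (a : BasisL) (u : LL) (c : BasisL) : WW :=
  u.sum fun b cb => Finsupp.single (a, b, c) cb
noncomputable def t3 (a b : BasisL) (u : LL) : WW :=
  u.sum fun c cc => Finsupp.single (a, b, c) cc
noncomputable def t23 (a : BasisL) (u : VV) : WW :=
  u.sum fun bc x => Finsupp.single (a, bc.1, bc.2) x

/-- c(r) = [r¹²,r¹³] + [r¹²,r²³] + [r¹³,r²³] ∈ 𝔏⊗𝔏⊗𝔏. -/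
noncomputable def cYB (r : VV) : WW :=
  r.sum fun ab x => r.sum fun ab' y =>
    (x * y) •
      (((-1 : ℂ) ^ (pN ab'.1 * pN ab.2)) • t1 (bb ab.1 ab'.1) ab.2 ab'.2
        + t2 ab.1 (bb ab.2 ab'.1) ab'.2
        + ((-1 : ℂ) ^ (pN ab'.1 * pN ab.2)) • t3 ab.1 ab'.1 (bb ab.2 ab'.2))

/-- Super adjoint diagonal action of a basis element on a ⊗ b ⊗ c. -/
noncomputable def act3B (d a b c : BasisL) : WW :=
  t1 (bb d a) b c + ((-1 : ℂ) ^ (pN d * pN a)) • t2 a (bb d b) c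
    + ((-1 : ℂ) ^ (pN d * (pN a + pN b))) • t3 a b (bb d c)

/-- Super adjoint diagonal action of x ∈ 𝔏 on 𝔏⊗𝔏⊗𝔏. -/
noncomputable def act3 (x : LL) (u : WW) : WW :=
  x.sum fun d cd => u.sum fun abc cu => (cd * cu) • act3B d abc.1 abc.2.1 abc.2.2

/-- The super-cyclic map ξ(a⊗b⊗c) = (−1)^{[a]([b]+[c])} b⊗c⊗a. -/
noncomputable def xiW (u : WW) : WW :=
  u.sum fun abc x =>
    (((-1 : ℂ) ^ (pN abc.1 * (pN abc.2.1 + pN abc.2.2))) * x) •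
      Finsupp.single (abc.2.1, abc.2.2, abc.1) (1 : ℂ)

/-- (1 ⊗ Δ) applied to an element of 𝔏⊗𝔏. -/
noncomputable def oneTensor (D : LL →ₗ[ℂ] VV) (u : VV) : WW :=
  u.sum fun ab c => c • t23 ab.1 (D (Finsupp.single ab.2 1))

/-- x ∈ 𝔏 (support consists of good basis elements). -/
def inL (Γ : AddSubgroup ℝ) (s : ℝ) (x : LL) : Prop :=
  ∀ a ∈ x.support, good Γ s a

/-- u ∈ 𝔏 ⊗ 𝔏. -/
def inV (Γ : AddSubgroup ℝ) (s : ℝ) (u : VV) : Prop :=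
  ∀ ab ∈ u.support, good Γ s ab.1 ∧ good Γ s ab.2

/-- x ∈ 𝔏_p, the homogeneous component of degree p. -/
def inComp (Γ : AddSubgroup ℝ) (s : ℝ) (p : ℝ) (x : LL) : Prop :=
  ∀ a ∈ x.support, good Γ s a ∧ degB a = p

/-- u ∈ 𝔙_r = ⊕_{p+q=r} 𝔏_p ⊗ 𝔏_q. -/
def inCompV (Γ : AddSubgroup ℝ) (s : ℝ) (r : ℝ) (u : VV) : Prop :=
  ∀ ab ∈ u.support, good Γ s ab.1 ∧ good Γ s ab.2 ∧ degB ab.1 + degB ab.2 = r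

/-- x is ℤ₂-homogeneous of parity i. -/
def IsHomogP (x : LL) (i : ℕ) : Prop :=
  ∀ a ∈ x.support, pN a % 2 = i % 2

/-- u ∈ 𝔏⊗𝔏 is ℤ₂-homogeneous of parity i. -/
def IsHomogVP (u : VV) (i : ℕ) : Prop :=
  ∀ ab ∈ u.support, (pN ab.1 + pN ab.2) % 2 = i % 2

/-- d : 𝔏 → 𝔏⊗𝔏 is a homogeneous derivation of parity ι (for the super
adjoint diagonal action):
d([x,y]) = (−1)^{[d][x]} x∘d(y) − (−1)^{[y]([d]+[x])} y∘d(x). -/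
def IsDer (Γ : AddSubgroup ℝ) (s : ℝ) (ι : ℕ) (d : LL →ₗ[ℂ] VV) : Prop :=
  (∀ x, inL Γ s x → inV Γ s (d x)) ∧
  (∀ (i : ℕ) (x : LL), inL Γ s x → IsHomogP x i → IsHomogVP (d x) (i + ι)) ∧
  ∀ (i j : ℕ) (x y : LL), inL Γ s x → inL Γ s y → IsHomogP x i → IsHomogP y j →
    d (br x y)
      = ((-1 : ℂ) ^ (ι * i)) • act x (d y) - ((-1 : ℂ) ^ (j * (ι + i))) • act y (d x)

/-- d has degree t : d(𝔏_p) ⊆ 𝔙_{p+t}. -/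
def HasDeg (Γ : AddSubgroup ℝ) (s : ℝ) (t : ℝ) (d : LL →ₗ[ℂ] VV) : Prop :=
  ∀ (p : ℝ) (x : LL), inComp Γ s p x → inCompV Γ s (p + t) (d x)


/-- Shift of a basis element by adding p to its index. -/
noncomputable def shiftB (p : ℝ) : BasisL → BasisL
  | BasisL.L q => BasisL.L (p + q)
  | BasisL.I q => BasisL.I (p + q)
  | BasisL.G r => BasisL.G (p + r)
  | BasisL.H r => BasisL.H (p + r)

/-- Coefficient appearing in [L_p, a]. -/
noncomputable def cf (p : ℝ) : BasisL → ℝ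
  | BasisL.L q => p - q
  | BasisL.I q => p - q
  | BasisL.G r => p / 2 - r
  | BasisL.H r => p / 2 - r

/-- The unique value of p for which cf p a = 0. -/
noncomputable def badB : BasisL → ℝ
  | BasisL.L q => q
  | BasisL.I q => q
  | BasisL.G r => 2 * r
  | BasisL.H r => 2 * r

lemma cf_ne_zero {p : ℝ} {a : BasisL} (h : p ≠ badB a) : cf p a ≠ 0 := by
  cases a <;> simp only [cf, badB] at * <;> intro h0 <;> apply h <;> linarith

lemma degB_shiftB (p : ℝ) (a : BasisL) : degB (shiftB p a) = p + degB a := by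
  cases a <;> simp [shiftB, degB]

lemma shiftB_inj {p : ℝ} {a a' : BasisL} (h : shiftB p a = shiftB p a') : a = a' := by
  cases a <;> cases a' <;> simp_all [shiftB] <;> linarith

lemma bb_L (p : ℝ) (a : BasisL) :
    bb (BasisL.L p) a = Finsupp.single (shiftB p a) ((cf p a : ℝ) : ℂ) := by
  cases a <;> simp [bb, shiftB, cf, bL, bI, bG, bH, Finsupp.smul_single]

lemma tenL_single (a : BasisL) (c : ℂ) (b : BasisL) :
    tenL (Finsupp.single a c) b = Finsupp.single (a, b) c := by
  unfold tenL
  rw [Finsupp.sum_single_index]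
  simp

lemma tenR_single (a : BasisL) (b : BasisL) (c : ℂ) :
    tenR a (Finsupp.single b c) = Finsupp.single (a, b) c := by
  unfold tenR
  rw [Finsupp.sum_single_index]
  simp

lemma actB_L (p : ℝ) (a b : BasisL) :
    actB (BasisL.L p) a b
      = Finsupp.single (shiftB p a, b) ((cf p a : ℝ) : ℂ)
        + Finsupp.single (a, shiftB p b) ((cf p b : ℝ) : ℂ) := by
  unfold actB
  rw [bb_L, bb_L, tenL_single, tenR_single]
  simp [pN]

lemma act_L (p : ℝ) (u : VV) :
    act (bL p) u = u.sum fun ab cab => cab •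
      (Finsupp.single (shiftB p ab.1, ab.2) ((cf p ab.1 : ℝ) : ℂ)
        + Finsupp.single (ab.1, shiftB p ab.2) ((cf p ab.2 : ℝ) : ℂ)) := by
  unfold act bL
  rw [Finsupp.sum_single_index]
  · simp [actB_L]
  · simp

lemma key_ne (u : VV) (p : ℝ) (a₀ b₀ : BasisL)
    (hmem : (a₀, b₀) ∈ u.support)
    (hext : ∀ ab ∈ u.support, ¬(ab.1 = shiftB p a₀ ∧ shiftB p ab.2 = b₀))
    (hcf : cf p a₀ ≠ 0) : act (bL p) u ≠ 0 := by
  intro h0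
  rw [act_L] at h0
  have happ := congrArg (fun v : VV => v (shiftB p a₀, b₀)) h0
  simp only [Finsupp.sum, Finsupp.finset_sum_apply, Finsupp.smul_apply,
    Finsupp.add_apply, smul_eq_mul, Finsupp.coe_zero, Pi.zero_apply] at happ
  rw [Finset.sum_eq_single (a₀, b₀)] at happ
  · rw [Finsupp.single_eq_same, Finsupp.single_eq_of_ne', add_zero] at happ
    · rcases mul_eq_zero.mp happ with h1 | h2
      · exact Finsupp.mem_support_iff.mp hmem h1
      · exact hcf (Complex.ofReal_eq_zero.mp h2)
    · intro hcontra
      have := Prod.mk.injEq _ _ _ _ ▸ hcontra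
      rw [Prod.mk.injEq] at hcontra
      exact hext (a₀, b₀) hmem ⟨hcontra.1, hcontra.2⟩
  · intro ab hab hne
    have h1 : Finsupp.single (shiftB p ab.1, ab.2) ((cf p ab.1 : ℝ) : ℂ)
        (shiftB p a₀, b₀) = 0 := by
      apply Finsupp.single_eq_of_ne'
      intro hcontra
      rw [Prod.mk.injEq] at hcontra
      exact hne (Prod.ext (shiftB_inj hcontra.1) hcontra.2)
    have h2 : Finsupp.single (ab.1, shiftB p ab.2) ((cf p ab.2 : ℝ) : ℂ)
        (shiftB p a₀, b₀) = 0 := by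
      apply Finsupp.single_eq_of_ne'
      intro hcontra
      rw [Prod.mk.injEq] at hcontra
      exact hext ab hab ⟨hcontra.1, hcontra.2⟩
    rw [h1, h2, add_zero, mul_zero]
  · intro hns
    exact absurd hmem hns

lemma exists_good_m {S : Set ℤ} (hS : S.Infinite) (ε : ℝ) (hε : ε ≠ 0) (c : ℝ) :
    ∃ m ∈ S, ε * (m : ℝ) ≠ c := by
  have hfin : {m : ℤ | ε * (m : ℝ) = c}.Finite := by
    apply Set.Subsingleton.finite
    intro m₁ h₁ m₂ h₂
    have : ε * (m₁ : ℝ) = ε * (m₂ : ℝ) := by rw [h₁, h₂]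
    have := mul_left_cancel₀ hε this
    exact_mod_cast this
  obtain ⟨m, hm⟩ := (hS.diff hfin).nonempty
  exact ⟨m, hm.1, hm.2⟩

/-- if u ∈ 𝔏 ⊗ 𝔏 satisfies L_{εm} ∘ u = 0 for infinitely many
integers m > 0, or for infinitely many m < 0, then u = 0. -/
theorem stmt7 (Γ : AddSubgroup ℝ) (hΓ : Γ ≠ ⊥) (s : ℝ) (hs : 2 * s ∈ Γ)
    (ε : ℝ) (hε : ε ∈ Γ) (hεpos : 0 < ε)
    (u : VV) (hu : inV Γ s u)
    (h : {m : ℤ | 0 < m ∧ act (bL (ε * m)) u = 0}.Infinite ∨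
         {m : ℤ | m < 0 ∧ act (bL (ε * m)) u = 0}.Infinite) :
    u = 0 := by
  by_contra hu0
  have hne : u.support.Nonempty := Finsupp.support_nonempty_iff.mpr hu0
  rcases h with hInf | hInf
  · obtain ⟨ab₀, hmem, hmax⟩ := u.support.exists_max_image
      (fun ab => 2 * degB ab.1 + degB ab.2) hne
    obtain ⟨m, hmS, hmne⟩ := exists_good_m hInf ε (ne_of_gt hεpos) (badB ab₀.1)
    obtain ⟨hmpos, hact⟩ := hmS
    set p : ℝ := ε * (m : ℝ) with hp
    have hppos : 0 < p := mul_pos hεpos (by exact_mod_cast hmpos)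
    refine key_ne u p ab₀.1 ab₀.2 (by simpa using hmem) ?_ (cf_ne_zero hmne) hact
    intro ab hab ⟨h1, h2⟩
    have hle := hmax ab hab
    have hd1 : degB ab.1 = p + degB ab₀.1 := by rw [h1, degB_shiftB]
    have hd2 : degB ab₀.2 = p + degB ab.2 := by rw [← h2, degB_shiftB]
    linarith
  · obtain ⟨ab₀, hmem, hmin⟩ := u.support.exists_min_image
      (fun ab => 2 * degB ab.1 + degB ab.2) hne
    obtain ⟨m, hmS, hmne⟩ := exists_good_m hInf ε (ne_of_gt hεpos) (badB ab₀.1)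
    obtain ⟨hmneg, hact⟩ := hmS
    set p : ℝ := ε * (m : ℝ) with hp
    have hpneg : p < 0 := mul_neg_of_pos_of_neg hεpos (by exact_mod_cast hmneg)
    refine key_ne u p ab₀.1 ab₀.2 (by simpa using hmem) ?_ (cf_ne_zero hmne) hact
    intro ab hab ⟨h1, h2⟩
    have hle := hmin ab hab
    have hd1 : degB ab.1 = p + degB ab₀.1 := by rw [h1, degB_shiftB]
    have hd2 : degB ab₀.2 = p + degB ab.2 := by rw [← h2, degB_shiftB]
    linarith
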